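/- Let M be an irreducible nonnegative n×n real matrix, and suppose v and w are both nonnegative eigenvectors of M (possibly for different eigenvalues). Then v and w are scalar multiples of each other; in particular their eigenvalues coincide (this common eigenvalue being the Perron–Frobenius eigenvalue). -/
import Mathlib

private lemma pow_entry_nonneg {n : ℕ} (M : Matrix (Fin n) (Fin n) ℝ)
    (hM : ∀ i j, 0 ≤ M i j) (k : ℕ) : ∀ i j, 0 ≤ (M ^ k) i j := by
  induction k with
  | zero => intro i j; simp [Matrix.one_apply]; positivity
  | succ k ih =>
      intro i j
      rw [pow_succ, Matrix.mul_apply]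
      exact Finset.sum_nonneg fun l _ => mul_nonneg (ih i l) (hM l j)

private lemma pow_mulVec_eig {n : ℕ} (M : Matrix (Fin n) (Fin n) ℝ)
    (v : Fin n → ℝ) (a : ℝ) (hva : M.mulVec v = a • v) (k : ℕ) :
    (M ^ k).mulVec v = (a ^ k) • v := by
  induction k with
  | zero => simp
  | succ k ih =>
      rw [pow_succ, ← Matrix.mulVec_mulVec, hva, Matrix.mulVec_smul, ih,
        pow_succ, smul_smul, mul_comm]

private lemma mulVec_single_le {n : ℕ} (A : Matrix (Fin n) (Fin n) ℝ)
    (hA : ∀ i j, 0 ≤ A i j) (u : Fin n → ℝ) (hu : ∀ i, 0 ≤ u i) (i j : Fin n) :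
    A i j * u j ≤ A.mulVec u i := by
  rw [Matrix.mulVec, dotProduct]
  exact Finset.single_le_sum (fun l _ => mul_nonneg (hA i l) (hu l))
    (Finset.mem_univ j)

/-- positivity of nonneg eigenvector and its eigenvalue -/
private lemma eig_pos {n : ℕ} (M : Matrix (Fin n) (Fin n) ℝ)
    (hM : ∀ i j, 0 ≤ M i j)
    (hirr : ∀ i j : Fin n, ∃ k : ℕ, 1 ≤ k ∧ 0 < (M ^ k) i j)
    (v : Fin n → ℝ) (hv0 : v ≠ 0) (hvnn : ∀ i, 0 ≤ v i) (a : ℝ)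
    (hva : M.mulVec v = a • v) : (∀ i, 0 < v i) ∧ 0 < a := by
  obtain ⟨i, hi⟩ : ∃ i, 0 < v i := by
    by_contra h
    push_neg at h
    exact hv0 (funext fun i => le_antisymm (h i) (hvnn i))
  have ha0 : 0 ≤ a := by
    have h1 : 0 ≤ (M.mulVec v) i := by
      simp only [Matrix.mulVec, dotProduct]
      exact Finset.sum_nonneg fun l _ => mul_nonneg (hM i l) (hvnn l)
    rw [hva] at h1
    simp only [Pi.smul_apply, smul_eq_mul] at h1
    nlinarith
  have hpos : ∀ j, 0 < v j := by
    intro j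
    obtain ⟨k, hk1, hk⟩ := hirr j i
    have h1 : (M ^ k) j i * v i ≤ a ^ k * v j := by
      have := mulVec_single_le (M ^ k) (pow_entry_nonneg M hM k) v hvnn j i
      rwa [pow_mulVec_eig M v a hva k] at this
    have h2 : 0 < a ^ k * v j := lt_of_lt_of_le (mul_pos hk hi) h1
    nlinarith [pow_nonneg ha0 k, hvnn j]
  refine ⟨hpos, ?_⟩
  obtain ⟨k, hk1, hk⟩ := hirr i i
  have h1 : (M ^ k) i i * v i ≤ a ^ k * v i := by
    have := mulVec_single_le (M ^ k) (pow_entry_nonneg M hM k) v hvnn i i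
    rwa [pow_mulVec_eig M v a hva k] at this
  have h2 : 0 < a ^ k := by nlinarith
  rcases ha0.lt_or_eq with h | h
  · exact h
  · exfalso; rw [← h] at h2; simp [zero_pow (Nat.one_le_iff_ne_zero.mp hk1)] at h2

/-- main lemma assuming a ≤ b : v is a multiple of w -/
private lemma key {n : ℕ} (M : Matrix (Fin n) (Fin n) ℝ)
    (hM : ∀ i j, 0 ≤ M i j)
    (hirr : ∀ i j : Fin n, ∃ k : ℕ, 1 ≤ k ∧ 0 < (M ^ k) i j)
    (v w : Fin n → ℝ) (hv0 : v ≠ 0) (hw0 : w ≠ 0)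
    (hvnn : ∀ i, 0 ≤ v i) (hwnn : ∀ i, 0 ≤ w i)
    (a b : ℝ) (hva : M.mulVec v = a • v) (hwb : M.mulVec w = b • w)
    (hab : a ≤ b) : ∃ s : ℝ, 0 < s ∧ v = s • w := by
  obtain ⟨hvpos, ha⟩ := eig_pos M hM hirr v hv0 hvnn a hva
  obtain ⟨hwpos, hb⟩ := eig_pos M hM hirr w hw0 hwnn b hwb
  have hn : 0 < n := by
    rcases Nat.eq_zero_or_pos n with h | h
    · exact absurd (funext fun i => absurd i.2 (by omega)) hv0
    · exact h
  haveI : Nonempty (Fin n) := ⟨⟨0, hn⟩⟩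
  obtain ⟨i0, -, hmin⟩ := Finset.exists_min_image Finset.univ
    (fun i => v i / w i) ⟨Classical.arbitrary (Fin n), Finset.mem_univ _⟩
  set s : ℝ := v i0 / w i0 with hs
  have hspos : 0 < s := div_pos (hvpos i0) (hwpos i0)
  set u : Fin n → ℝ := v - s • w with hu
  have hunn : ∀ j, 0 ≤ u j := by
    intro j
    have h1 : s ≤ v j / w j := hmin j (Finset.mem_univ j)
    have h2 : s * w j ≤ v j := (le_div_iff₀ (hwpos j)).mp h1
    simp only [hu, Pi.sub_apply, Pi.smul_apply, smul_eq_mul]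
    linarith
  have hui0 : u i0 = 0 := by
    simp only [hu, Pi.sub_apply, Pi.smul_apply, smul_eq_mul, hs]
    rw [div_mul_cancel₀ _ (hwpos i0).ne', sub_self]
  have huz : u = 0 := by
    by_contra huz
    obtain ⟨j, hj⟩ : ∃ j, 0 < u j := by
      by_contra h
      push_neg at h
      exact huz (funext fun j => le_antisymm (h j) (hunn j))
    obtain ⟨k, hk1, hk⟩ := hirr i0 j
    have h1 : (M ^ k) i0 j * u j ≤ ((M ^ k).mulVec u) i0 :=
      mulVec_single_le (M ^ k) (pow_entry_nonneg M hM k) u hunn i0 j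
    have h2 : (M ^ k).mulVec u = (a ^ k) • v - s • (b ^ k) • w := by
      rw [hu, Matrix.mulVec_sub, Matrix.mulVec_smul,
        pow_mulVec_eig M v a hva k, pow_mulVec_eig M w b hwb k]
    have h3 : ((M ^ k).mulVec u) i0 = a ^ k * v i0 - s * (b ^ k * w i0) := by
      rw [h2]; simp
    have h4 : v i0 = s * w i0 := by
      have := hui0
      simp only [hu, Pi.sub_apply, Pi.smul_apply, smul_eq_mul] at this
      linarith
    have hak : a ^ k ≤ b ^ k := pow_le_pow_left₀ ha.le hab k
    have h5 : ((M ^ k).mulVec u) i0 ≤ 0 := by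
      rw [h3, h4]
      nlinarith [mul_nonneg (sub_nonneg.mpr hak) (mul_nonneg hspos.le (hwpos i0).le)]
    nlinarith [mul_pos hk hj]
  refine ⟨s, hspos, ?_⟩
  have : v - s • w = 0 := by rw [← hu, huz]
  funext i
  have := congrFun this i
  simp only [Pi.sub_apply, Pi.smul_apply, smul_eq_mul, Pi.zero_apply] at this ⊢
  linarith

theorem nonneg_eigenvectors_of_irreducible_proportional {n : ℕ}
    (M : Matrix (Fin n) (Fin n) ℝ)
    (hM : ∀ i j, 0 ≤ M i j)
    (hirr : ∀ i j : Fin n, ∃ k : ℕ, 1 ≤ k ∧ 0 < (M ^ k) i j)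
    (v w : Fin n → ℝ) (hv0 : v ≠ 0) (hw0 : w ≠ 0)
    (hvnn : ∀ i, 0 ≤ v i) (hwnn : ∀ i, 0 ≤ w i)
    (a b : ℝ) (hva : M.mulVec v = a • v) (hwb : M.mulVec w = b • w) :
    (∃ c : ℝ, w = c • v) ∧ a = b := by
  have main : ∀ c : ℝ, w = c • v → a = b := by
    intro c hc
    subst hc
    rw [Matrix.mulVec_smul, hva, smul_smul, smul_smul] at hwb
    have hc0 : c ≠ 0 := by
      rintro rfl; simp at hw0
    have h : c * a = b * c := by
      by_contra h
      have hz : (c * a - b * c) • v = 0 := by rw [sub_smul, hwb, sub_self]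
      exact hv0 ((smul_eq_zero.mp hz).resolve_left (sub_ne_zero.mpr h))
    rw [mul_comm b c] at h
    exact mul_left_cancel₀ hc0 h
  rcases le_total a b with hab | hab
  · obtain ⟨s, hs, hv⟩ := key M hM hirr v w hv0 hw0 hvnn hwnn a b hva hwb hab
    have hw : w = s⁻¹ • v := by rw [hv, smul_smul, inv_mul_cancel₀ hs.ne', one_smul]
    exact ⟨⟨s⁻¹, hw⟩, main _ hw⟩
  · obtain ⟨s, hs, hw⟩ := key M hM hirr w v hw0 hv0 hwnn hvnn b a hwb hva hab
    exact ⟨⟨s, hw⟩, main _ hw⟩
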